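/- With notation as in the context, assume the set {f(a) : f ∈ 𝓕} ∪ {f(b) : f ∈ 𝓕} satisfies the descending chain condition, let K ∈ ℝ, and let W be the set of all linear functions w such that there exist an integer s ∈ ℤ_{>0}, positive integers r₁, …, r_s, and functions w₁, …, w_s ∈ 𝒟(𝓕, [a,b]), none identically zero, satisfying r₁w₁(t) + ⋯ + r_s w_s(t) = K for all t ∈ [a,b] and w = wⱼ for some j. Then the set 𝓕′ := { f ∈ 𝓕 : there exist m, n ∈ ℤ_{>0}, an integer k ≥ 0, positive integers n₁, …, n_k, and functions f₁, …, f_k ∈ 𝓕 such that the linear function (m − 1 + n·f + n₁f₁ + ⋯ + n_k f_k)/m belongs to W } is a finite subset of 𝓕. -/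

import Mathlib

open Set

private lemma noStrictAnti {T : Set ℝ} (hT : T.IsWF) {u : ℕ → ℝ}
    (hu : ∀ i, u i ∈ T) (h : StrictAnti u) : False := by
  rw [Set.isWF_iff_no_descending_seq] at hT
  exact hT u h fun n => hu n

private lemma isWF_of_seq {T : Set ℝ}
    (h : ∀ u : ℕ → ℝ, (∀ i, u i ∈ T) → StrictAnti u → False) : T.IsWF := by
  rw [Set.isWF_iff_no_descending_seq]
  exact fun f hf hmem => h f (fun i => hmem i) hf

private lemma exists_const_subseq {γ : Type*} [Finite γ] (v : ℕ → γ) :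
    ∃ c : γ, ∃ g : ℕ ↪o ℕ, ∀ i, v (g i) = c := by
  classical
  obtain ⟨c, hc⟩ := Finite.exists_infinite_fiber v
  haveI : Infinite (v ⁻¹' {c} : Set ℕ) := hc
  refine ⟨c, Nat.orderEmbeddingOfSet (v ⁻¹' {c}), fun i => ?_⟩
  have h2 : Nat.orderEmbeddingOfSet (v ⁻¹' {c}) i ∈ Set.range (Nat.orderEmbeddingOfSet (v ⁻¹' {c})) :=
    Set.mem_range_self i
  rw [Nat.orderEmbeddingOfSet_range (v ⁻¹' {c})] at h2
  exact h2

private lemma exists_const_subseq_nat (v : ℕ → ℕ) (B : ℕ) (hv : ∀ i, v i ≤ B) :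
    ∃ m : ℕ, ∃ g : ℕ ↪o ℕ, ∀ i, v (g i) = m := by
  obtain ⟨c, g, hg⟩ :=
    exists_const_subseq (fun i => (⟨v i, Nat.lt_succ_of_le (hv i)⟩ : Fin (B + 1)))
  exact ⟨(c : ℕ), g, fun i => by simpa using congrArg Fin.val (hg i)⟩

private lemma exists_monotone_subseq_of_isWF {T : Set ℝ} (hT : T.IsWF) (u : ℕ → ℝ)
    (hu : ∀ i, u i ∈ T) : ∃ g : ℕ ↪o ℕ, Monotone (u ∘ g) :=
  hT.isPWO.exists_monotone_subseq hu

private lemma exists_monotone_subseq_family :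
    ∀ (s : ℕ) (T : Fin s → Set ℝ), (∀ j, (T j).IsWF) → ∀ (u : ℕ → Fin s → ℝ),
      (∀ i j, u i j ∈ T j) → ∃ g : ℕ ↪o ℕ, ∀ j, Monotone fun i => u (g i) j := by
  intro s
  induction s with
  | zero => exact fun T _ u _ => ⟨(OrderIso.refl ℕ).toOrderEmbedding, fun j => j.elim0⟩
  | succ s ih =>
    intro T hT u hu
    obtain ⟨g₁, hg₁⟩ := ih (fun j => T j.castSucc) (fun j => hT _)
      (fun i j => u i j.castSucc) (fun i j => hu _ _)
    obtain ⟨g₂, hg₂⟩ := exists_monotone_subseq_of_isWF (hT (Fin.last s))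
      (fun i => u (g₁ i) (Fin.last s)) (fun i => hu _ _)
    refine ⟨g₂.trans g₁, fun j => ?_⟩
    refine Fin.lastCases ?_ ?_ j
    · exact fun i i' h => hg₂ h
    · intro j'
      exact fun i i' h => hg₁ j' (g₂.monotone h)
open Set Pointwise

private def iterAdd (Z : Set ℝ) : ℕ → Set ℝ
  | 0 => {0}
  | (M + 1) => Z + iterAdd Z M

private lemma iterAdd_isWF {Z : Set ℝ} (hZ : Z.IsWF) : ∀ M, (iterAdd Z M).IsWF
  | 0 => (Set.finite_singleton (0 : ℝ)).isWF
  | (M + 1) => hZ.add (iterAdd_isWF hZ M)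

private lemma zero_mem_iterAdd {Z : Set ℝ} (h0 : (0 : ℝ) ∈ Z) : ∀ M, (0 : ℝ) ∈ iterAdd Z M
  | 0 => rfl
  | (M + 1) => Set.mem_add.mpr ⟨0, h0, 0, zero_mem_iterAdd h0 M, by norm_num⟩

private lemma add_mem_iterAdd {Z : Set ℝ} :
    ∀ (M₁ M₂ : ℕ) (x y : ℝ), x ∈ iterAdd Z M₁ → y ∈ iterAdd Z M₂ →
      x + y ∈ iterAdd Z (M₁ + M₂) := by
  intro M₁
  induction M₁ with
  | zero =>
    intro M₂ x y hx hy
    have : x = 0 := hx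
    simpa [this] using hy
  | succ M ih =>
    intro M₂ x y hx hy
    obtain ⟨z, hz, x', hx', rfl⟩ := Set.mem_add.mp hx
    have : M + 1 + M₂ = (M + M₂) + 1 := by omega
    rw [this]
    exact Set.mem_add.mpr ⟨z, hz, x' + y, ih M₂ x' y hx' hy, by ring⟩

private lemma sum_mem_iterAdd {Z : Set ℝ} {ε : ℝ} (hε : 0 < ε) (h0 : (0 : ℝ) ∈ Z)
    (hpos : ∀ x ∈ Z, 0 ≤ x) (hgap : ∀ x ∈ Z, x = 0 ∨ ε ≤ x) :
    ∀ (k M : ℕ) (z : Fin k → ℝ), (∀ l, z l ∈ Z) → (∑ l, z l) < ((M : ℝ) + 1) * ε →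
      (∑ l, z l) ∈ iterAdd Z M := by
  intro k
  induction k with
  | zero =>
    intro M z _ _
    simpa using zero_mem_iterAdd h0 M
  | succ k ih =>
    intro M z hz hsum
    rw [Fin.sum_univ_succ] at hsum ⊢
    rcases hgap _ (hz 0) with h00 | h0e
    · rw [h00, zero_add] at hsum ⊢
      exact ih M _ (fun l => hz _) hsum
    · have hrest0 : 0 ≤ ∑ l : Fin k, z l.succ :=
        Finset.sum_nonneg fun l _ => hpos _ (hz _)
      cases M with
      | zero => exfalso; norm_num at hsum; nlinarith
      | succ M =>
        have hlt : (∑ l : Fin k, z l.succ) < ((M : ℝ) + 1) * ε := by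
          push_cast at hsum ⊢
          nlinarith
        exact Set.mem_add.mpr ⟨z 0, hz 0, _, ih M (fun l => z l.succ) (fun l => hz _) hlt, rfl⟩

/-- A set `S ⊆ ℝ` satisfies the descending chain condition (DCC) if there is no
infinite strictly decreasing sequence of elements of `S`. -/
def DCC (S : Set ℝ) : Prop :=
  ¬ ∃ f : ℕ → ℝ, (∀ i, f i ∈ S) ∧ StrictAnti f

/-- A real function is linear if it has the form `t ↦ p * t + q`. -/
def IsLinearFun (f : ℝ → ℝ) : Prop := ∃ p q : ℝ, ∀ t, f t = p * t + q

/-- `(𝓕₊, [a,c])`: `{0}` together with all finite positive-integer combinations of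
elements of `𝓕` that are bounded above by `1` on `[a,c]`. -/
def FPlus (F : Set (ℝ → ℝ)) (a c : ℝ) : Set (ℝ → ℝ) :=
  {0} ∪ { v | (∃ k : ℕ, 0 < k ∧ ∃ n : Fin k → ℕ, ∃ f : Fin k → ℝ → ℝ,
      (∀ i, 0 < n i) ∧ (∀ i, f i ∈ F) ∧ v = fun t => ∑ i, (n i : ℝ) * f i t) ∧
      ∀ t ∈ Set.Icc a c, v t ≤ 1 }

/-- `D(𝓕, [a,c])`: all functions `(m - 1 + v)/m` with `m ∈ ℤ_{>0}`, `v ∈ (𝓕₊,[a,c])`,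
that are bounded above by `1` on `[a,c]`. -/
def DOp (F : Set (ℝ → ℝ)) (a c : ℝ) : Set (ℝ → ℝ) :=
  { w | ∃ m : ℕ, 0 < m ∧ ∃ v ∈ FPlus F a c,
      w = (fun t => ((m : ℝ) - 1 + v t) / m) ∧ ∀ t ∈ Set.Icc a c, w t ≤ 1 }

/-- `𝒟(𝓕, [a,b]) = ⋃_{a < c ≤ b} D(𝓕, [a,c])`. -/
def calD (F : Set (ℝ → ℝ)) (a b : ℝ) : Set (ℝ → ℝ) :=
  ⋃ c ∈ Set.Ioc a b, DOp F a c

/-- The set of linear functions appearing as a summand in some numerically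
trivial relation `r₁w₁ + ⋯ + r_s w_s = K` on `[a,b]` with all `wⱼ ∈ 𝒟(𝓕,[a,b])`
nonzero and all `rⱼ` positive integers. -/
def Wset (F : Set (ℝ → ℝ)) (a b K : ℝ) : Set (ℝ → ℝ) :=
  { w | ∃ s : ℕ, 0 < s ∧ ∃ r : Fin s → ℕ, ∃ ws : Fin s → ℝ → ℝ,
      (∀ j, 0 < r j) ∧ (∀ j, ws j ∈ calD F a b) ∧ (∀ j, ws j ≠ 0) ∧
      (∀ t ∈ Set.Icc a b, ∑ j, (r j : ℝ) * ws j t = K) ∧ ∃ j, w = ws j }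

private lemma isLinearFun_sum {k : ℕ} (n : Fin k → ℕ) (f : Fin k → ℝ → ℝ)
    (hf : ∀ l, IsLinearFun (f l)) : IsLinearFun (fun t => ∑ l, (n l : ℝ) * f l t) := by
  choose p q hpq using hf
  refine ⟨∑ l, (n l : ℝ) * p l, ∑ l, (n l : ℝ) * q l, fun t => ?_⟩
  rw [Finset.sum_mul, ← Finset.sum_add_distrib]
  exact Finset.sum_congr rfl fun l _ => by rw [hpq l t]; ring

private lemma isLinearFun_zero : IsLinearFun (0 : ℝ → ℝ) := ⟨0, 0, fun t => by simp⟩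

private lemma linear_ext {a b : ℝ} (hab : a ≠ b) {f g : ℝ → ℝ} (hf : IsLinearFun f)
    (hg : IsLinearFun g) (ha : f a = g a) (hb : f b = g b) : f = g := by
  obtain ⟨p, q, hf⟩ := hf; obtain ⟨p', q', hg⟩ := hg
  rw [hf, hg] at ha hb
  have hp : p = p' := by
    have h1 : p * (a - b) = p' * (a - b) := by ring_nf; linarith
    have hab' : a - b ≠ 0 := sub_ne_zero.mpr hab
    exact mul_right_cancel₀ hab' h1
  have hq : q = q' := by rw [hp] at ha; linarith
  funext t; rw [hf, hg, hp, hq]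

private lemma linear_slope {a c b : ℝ} (hac : a < c) (hb : a ≤ b) {v : ℝ → ℝ}
    (hv : IsLinearFun v) (ha : v a = 1) (hc : v c ≤ 1) : v b ≤ 1 := by
  obtain ⟨p, q, hpq⟩ := hv
  rw [hpq] at ha hc ⊢
  have hp : p ≤ 0 := by nlinarith
  nlinarith [mul_nonneg (neg_nonneg.mpr hp) (sub_nonneg.mpr hb)]

/-- The set of endpoint values of members of `F`. -/
private def Svals (F : Set (ℝ → ℝ)) (a b : ℝ) : Set ℝ :=
  ((fun f : ℝ → ℝ => f a) '' F) ∪ ((fun f : ℝ → ℝ => f b) '' F)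

/-- Basic building blocks: `n * y` with `y` an endpoint value that is `≥ ε`, or `0`. -/
private def Zset (F : Set (ℝ → ℝ)) (a b ε : ℝ) : Set ℝ :=
  {u : ℝ | u = 0 ∨ ∃ n : ℕ, 1 ≤ n ∧ ∃ y ∈ Svals F a b, ε ≤ y ∧ u = (n : ℝ) * y}

private lemma Zset_zero {F : Set (ℝ → ℝ)} {a b ε : ℝ} : (0 : ℝ) ∈ Zset F a b ε := Or.inl rfl

private lemma Zset_gap {F : Set (ℝ → ℝ)} {a b ε : ℝ} (hε : 0 < ε) :
    ∀ u ∈ Zset F a b ε, u = 0 ∨ ε ≤ u := by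
  rintro u (rfl | ⟨n, hn, y, _, hεy, rfl⟩)
  · exact Or.inl rfl
  · right
    have h1 : (1 : ℝ) ≤ (n : ℝ) := by exact_mod_cast hn
    nlinarith

private lemma Zset_nonneg {F : Set (ℝ → ℝ)} {a b ε : ℝ} (hε : 0 < ε) :
    ∀ u ∈ Zset F a b ε, 0 ≤ u := by
  intro u hu
  rcases Zset_gap hε u hu with rfl | h
  · exact le_refl 0
  · linarith

private lemma Zset_isWF {F : Set (ℝ → ℝ)} {a b ε : ℝ} (hS : (Svals F a b).IsWF)
    (hε : 0 < ε) : (Zset F a b ε).IsWF := by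
  refine isWF_of_seq fun u hu hanti => ?_
  have hpos : ∀ i, 0 < u i := by
    intro i
    have h1 : u (i + 1) < u i := hanti (Nat.lt_succ_self i)
    have h2 := Zset_nonneg hε _ (hu (i + 1))
    linarith
  have hrep : ∀ i, ∃ n : ℕ, 1 ≤ n ∧ ∃ y, y ∈ Svals F a b ∧ ε ≤ y ∧ u i = (n : ℝ) * y := by
    intro i
    rcases hu i with h | ⟨n, hn, y, hy, hεy, huy⟩
    · exact absurd h (ne_of_gt (hpos i))
    · exact ⟨n, hn, y, hy, hεy, huy⟩
  choose n hn y hy hεy huy using hrep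
  have hb : ∀ i, n i ≤ Nat.ceil (u 0 / ε) := by
    intro i
    have h0 : (0 : ℝ) ≤ (n i : ℝ) := by positivity
    have h2 : u i ≤ u 0 := hanti.antitone (Nat.zero_le i)
    have h3 : (n i : ℝ) ≤ u 0 / ε := by
      rw [le_div_iff₀ hε]
      nlinarith [huy i, hεy i]
    exact_mod_cast h3.trans (Nat.le_ceil _)
  obtain ⟨m, g, hg⟩ := exists_const_subseq_nat n _ hb
  have hmpos : (0 : ℝ) < (m : ℝ) := by
    have := hg 0 ▸ hn (g 0); exact_mod_cast Nat.lt_of_lt_of_le Nat.zero_lt_one this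
  have hym : StrictAnti fun i => y (g i) := by
    intro i j hij
    have h1 : u (g j) < u (g i) := hanti (g.strictMono hij)
    rw [huy (g i), huy (g j), hg i, hg j] at h1
    exact lt_of_mul_lt_mul_left h1 hmpos.le
  exact noStrictAnti hS (fun i => hy (g i)) hym

/-- Finite sums of elements of `Zset`. -/
private def SumsZ (F : Set (ℝ → ℝ)) (a b ε : ℝ) : Set ℝ :=
  {x : ℝ | ∃ (k : ℕ) (z : Fin k → ℝ), (∀ l, z l ∈ Zset F a b ε) ∧ x = ∑ l, z l}

private lemma SumsZ_zero {F : Set (ℝ → ℝ)} {a b ε : ℝ} : (0 : ℝ) ∈ SumsZ F a b ε :=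
  ⟨0, Fin.elim0, fun l => l.elim0, by simp⟩

private lemma SumsZ_nonneg {F : Set (ℝ → ℝ)} {a b ε : ℝ} (hε : 0 < ε) {x : ℝ}
    (hx : x ∈ SumsZ F a b ε) : 0 ≤ x := by
  obtain ⟨k, z, hz, rfl⟩ := hx
  exact Finset.sum_nonneg fun l _ => Zset_nonneg hε _ (hz l)

private lemma SumsZ_gap {F : Set (ℝ → ℝ)} {a b ε : ℝ} (hε : 0 < ε) {x : ℝ}
    (hx : x ∈ SumsZ F a b ε) (hxpos : 0 < x) : ε ≤ x := by
  obtain ⟨k, z, hz, rfl⟩ := hx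
  obtain ⟨l, _, hl⟩ := Finset.exists_ne_zero_of_sum_ne_zero (ne_of_gt hxpos)
  have h1 : ε ≤ z l := (Zset_gap hε _ (hz l)).resolve_left hl
  have h2 : z l ≤ ∑ l, z l :=
    Finset.single_le_sum (fun l _ => Zset_nonneg hε _ (hz l)) (Finset.mem_univ l)
  linarith

private lemma SumsZ_mem_iterAdd {F : Set (ℝ → ℝ)} {a b ε : ℝ} (hε : 0 < ε) (M : ℕ) {x : ℝ}
    (hx : x ∈ SumsZ F a b ε) (hxle : x < ((M : ℝ) + 1) * ε) :
    x ∈ iterAdd (Zset F a b ε) M := by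
  obtain ⟨k, z, hz, rfl⟩ := hx
  exact sum_mem_iterAdd hε Zset_zero (Zset_nonneg hε) (Zset_gap hε) k M z hz hxle

/-- Anatomy of a member of `calD F a b`: the data we need about it. -/
private def Anat (F : Set (ℝ → ℝ)) (a b ε : ℝ) (w : ℝ → ℝ) : Prop :=
  ∃ (μ : ℕ) (xa xb : ℝ), 1 ≤ μ ∧
    w a = ((μ : ℝ) - 1 + xa) / μ ∧ w b = ((μ : ℝ) - 1 + xb) / μ ∧
    xa ∈ SumsZ F a b ε ∧ xb ∈ SumsZ F a b ε ∧ xa ≤ 1 ∧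
    (xa = 1 → xb ≤ 1) ∧ (w ≠ 0 → 2 ≤ μ ∨ ε ≤ xa + xb)

private lemma FPlus_anat {F : Set (ℝ → ℝ)} {a b c ε : ℝ} (hab : a < b)
    (hlin : ∀ f ∈ F, IsLinearFun f)
    (hnn : ∀ f ∈ F, ∀ t ∈ Set.Icc a b, 0 ≤ f t)
    (hgapS : ∀ x ∈ Svals F a b, 0 < x → ε ≤ x)
    (hc : c ∈ Set.Ioc a b) {v : ℝ → ℝ} (hv : v ∈ FPlus F a c) :
    v a ∈ SumsZ F a b ε ∧ v b ∈ SumsZ F a b ε ∧ v a ≤ 1 ∧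
      (v a = 1 → v b ≤ 1) ∧ ((v a = 0 ∧ v b = 0) → v = 0) := by
  have haI : a ∈ Set.Icc a b := ⟨le_refl a, hab.le⟩
  have hbI : b ∈ Set.Icc a b := ⟨hab.le, le_refl b⟩
  rcases hv with hv0 | ⟨⟨k, hk, n, fj, hn, hfj, hveq⟩, hvb⟩
  · have hv0' : v = 0 := hv0
    subst hv0'
    refine ⟨SumsZ_zero, SumsZ_zero, by norm_num, ?_, fun _ => rfl⟩
    intro h; norm_num at h
  · have hfa : ∀ l, fj l a ∈ Svals F a b := fun l => Or.inl ⟨fj l, hfj l, rfl⟩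
    have hfb : ∀ l, fj l b ∈ Svals F a b := fun l => Or.inr ⟨fj l, hfj l, rfl⟩
    have hfa0 : ∀ l, 0 ≤ fj l a := fun l => hnn _ (hfj l) a haI
    have hfb0 : ∀ l, 0 ≤ fj l b := fun l => hnn _ (hfj l) b hbI
    have hva : v a = ∑ l, (n l : ℝ) * fj l a := by rw [hveq]
    have hvbb : v b = ∑ l, (n l : ℝ) * fj l b := by rw [hveq]
    have hZa : ∀ l, (n l : ℝ) * fj l a ∈ Zset F a b ε := by
      intro l
      rcases eq_or_lt_of_le (hfa0 l) with h | h
      · exact Or.inl (by rw [← h, mul_zero])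
      · exact Or.inr ⟨n l, hn l, fj l a, hfa l, hgapS _ (hfa l) h, rfl⟩
    have hZb : ∀ l, (n l : ℝ) * fj l b ∈ Zset F a b ε := by
      intro l
      rcases eq_or_lt_of_le (hfb0 l) with h | h
      · exact Or.inl (by rw [← h, mul_zero])
      · exact Or.inr ⟨n l, hn l, fj l b, hfb l, hgapS _ (hfb l) h, rfl⟩
    have hvlin : IsLinearFun v := by
      rw [hveq]; exact isLinearFun_sum n fj fun l => hlin _ (hfj l)
    refine ⟨⟨k, _, hZa, hva⟩, ⟨k, _, hZb, hvbb⟩, hvb a ⟨le_refl a, hc.1.le⟩, ?_, ?_⟩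
    · intro h1
      exact linear_slope hc.1 hab.le hvlin h1 (hvb c ⟨hc.1.le, le_refl c⟩)
    · rintro ⟨ha0, hb0⟩
      have hterm : ∀ l, fj l = 0 := by
        intro l
        have hnl : (0 : ℝ) < (n l : ℝ) := by exact_mod_cast hn l
        have hza : ∀ l, (0:ℝ) ≤ (n l : ℝ) * fj l a :=
          fun l => mul_nonneg (by positivity) (hfa0 l)
        have hzb : ∀ l, (0:ℝ) ≤ (n l : ℝ) * fj l b :=
          fun l => mul_nonneg (by positivity) (hfb0 l)
        rw [hva] at ha0; rw [hvbb] at hb0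
        have h1 : (n l : ℝ) * fj l a = 0 :=
          (Finset.sum_eq_zero_iff_of_nonneg (fun l _ => hza l)).mp ha0 l (Finset.mem_univ l)
        have h2 : (n l : ℝ) * fj l b = 0 :=
          (Finset.sum_eq_zero_iff_of_nonneg (fun l _ => hzb l)).mp hb0 l (Finset.mem_univ l)
        have ha' : fj l a = 0 := by
          rcases mul_eq_zero.mp h1 with h | h
          · exact absurd h (ne_of_gt hnl)
          · exact h
        have hb' : fj l b = 0 := by
          rcases mul_eq_zero.mp h2 with h | h
          · exact absurd h (ne_of_gt hnl)
          · exact h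
        exact linear_ext hab.ne (hlin _ (hfj l)) isLinearFun_zero
          (by simpa using ha') (by simpa using hb')
      funext t
      rw [hveq]
      simp only [Pi.zero_apply]
      apply Finset.sum_eq_zero
      intro l _
      rw [hterm l]
      simp

private lemma calD_anat {F : Set (ℝ → ℝ)} {a b ε : ℝ} (hab : a < b)
    (hlin : ∀ f ∈ F, IsLinearFun f)
    (hnn : ∀ f ∈ F, ∀ t ∈ Set.Icc a b, 0 ≤ f t)
    (hgapS : ∀ x ∈ Svals F a b, 0 < x → ε ≤ x)
    (hε : 0 < ε) {w : ℝ → ℝ} (hw : w ∈ calD F a b) : Anat F a b ε w := by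
  obtain ⟨c, hc, hw⟩ := Set.mem_iUnion₂.mp hw
  obtain ⟨μ, hμ, v, hvF, hweq, hwb⟩ := hw
  obtain ⟨hSa, hSb, hva1, hslope, hzero⟩ := FPlus_anat hab hlin hnn hgapS hc hvF
  have hμ1 : 1 ≤ μ := hμ
  have hμR : (0 : ℝ) < (μ : ℝ) := by exact_mod_cast hμ
  refine ⟨μ, v a, v b, hμ1, by rw [hweq], by rw [hweq], hSa, hSb, hva1, hslope, ?_⟩
  intro hne
  by_cases h2 : 2 ≤ μ
  · exact Or.inl h2
  · right
    have hμeq : μ = 1 := by omega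
    subst hμeq
    have hvne : v ≠ 0 := by
      intro hv0
      apply hne
      funext t
      rw [hweq]
      simp [hv0]
    have hnb : ¬(v a = 0 ∧ v b = 0) := fun h => hvne (hzero h)
    have hva0 : 0 ≤ v a := SumsZ_nonneg hε hSa
    have hvb0 : 0 ≤ v b := SumsZ_nonneg hε hSb
    rcases lt_or_eq_of_le hva0 with h | h
    · have := SumsZ_gap hε hSa h
      linarith
    · rcases lt_or_eq_of_le hvb0 with h' | h'
      · have := SumsZ_gap hε hSb h'
        linarith
      · exact absurd ⟨h.symm, h'.symm⟩ hnb

private lemma Anat_waLe1 {F : Set (ℝ → ℝ)} {a b ε : ℝ} {w : ℝ → ℝ} (hε : 0 < ε)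
    (h : Anat F a b ε w) :
    0 ≤ w a ∧ w a ≤ 1 ∧ 0 ≤ w b ∧ (w a = 1 → w b ≤ 1) := by
  obtain ⟨μ, xa, xb, hμ, hwa, hwb, hxa, hxb, hxa1, hslope, -⟩ := h
  have hμR : (1 : ℝ) ≤ (μ : ℝ) := by exact_mod_cast hμ
  have hμ0 : (0 : ℝ) < (μ : ℝ) := by linarith
  have hxa0 : 0 ≤ xa := SumsZ_nonneg hε hxa
  have hxb0 : 0 ≤ xb := SumsZ_nonneg hε hxb
  refine ⟨?_, ?_, ?_, ?_⟩
  · rw [hwa]; exact div_nonneg (by linarith) hμ0.le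
  · rw [hwa, div_le_one hμ0]; linarith
  · rw [hwb]; exact div_nonneg (by linarith) hμ0.le
  · intro h1
    rw [hwa] at h1
    have hxaeq : xa = 1 := by field_simp at h1; linarith
    have := hslope hxaeq
    rw [hwb, div_le_one hμ0]; linarith

private lemma Anat_eps {F : Set (ℝ → ℝ)} {a b ε : ℝ} {w : ℝ → ℝ} (hε : 0 < ε) (hε1 : ε ≤ 1)
    (h : Anat F a b ε w) (hne : w ≠ 0) : ε ≤ w a + w b := by
  obtain ⟨μ, xa, xb, hμ, hwa, hwb, hxa, hxb, hxa1, hslope, hgap⟩ := h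
  have hμR : (1 : ℝ) ≤ (μ : ℝ) := by exact_mod_cast hμ
  have hμ0 : (0 : ℝ) < (μ : ℝ) := by linarith
  have hxa0 : 0 ≤ xa := SumsZ_nonneg hε hxa
  have hxb0 : 0 ≤ xb := SumsZ_nonneg hε hxb
  rcases hgap hne with h2 | hsum
  · have h2R : (2 : ℝ) ≤ (μ : ℝ) := by exact_mod_cast h2
    have h1 : (1 : ℝ) / 2 ≤ ((μ : ℝ) - 1 + xa) / μ := by
      rw [div_le_div_iff₀ (by norm_num) hμ0]; nlinarith
    have h1' : (1 : ℝ) / 2 ≤ ((μ : ℝ) - 1 + xb) / μ := by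
      rw [div_le_div_iff₀ (by norm_num) hμ0]; nlinarith
    rw [hwa, hwb]; linarith
  · rw [hwa, hwb]
    rw [← add_div, le_div_iff₀ hμ0]
    nlinarith

/-- Possible values at `a` (or at `b` when the value at `a` is `1`) of members of `calD`. -/
private def DaSet (F : Set (ℝ → ℝ)) (a b ε : ℝ) (M : ℕ) : Set ℝ :=
  {v : ℝ | ∃ (μ : ℕ) (x : ℝ), 1 ≤ μ ∧ x ∈ iterAdd (Zset F a b ε) M ∧ 0 ≤ x ∧ x ≤ 1 ∧
    v = ((μ : ℝ) - 1 + x) / μ}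

/-- Possible values at `b` of members of `calD` with bounded `μ`. -/
private def DbSet (F : Set (ℝ → ℝ)) (a b ε : ℝ) (M B : ℕ) : Set ℝ :=
  {v : ℝ | ∃ (μ : ℕ) (x : ℝ), 1 ≤ μ ∧ μ ≤ B ∧ x ∈ iterAdd (Zset F a b ε) M ∧ 0 ≤ x ∧
    v = ((μ : ℝ) - 1 + x) / μ}

private lemma x_from_v {μ : ℕ} {x v : ℝ} (hμ : 1 ≤ μ) (hv : v = ((μ : ℝ) - 1 + x) / μ) :
    x = 1 - (μ : ℝ) * (1 - v) := by
  have hμ0 : ((μ : ℝ)) ≠ 0 := by positivity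
  field_simp at hv
  linarith

private lemma DaSet_isWF {F : Set (ℝ → ℝ)} {a b ε : ℝ} (hS : (Svals F a b).IsWF)
    (hε : 0 < ε) (M : ℕ) : (DaSet F a b ε M).IsWF := by
  have hT : (iterAdd (Zset F a b ε) M).IsWF := iterAdd_isWF (Zset_isWF hS hε) M
  refine isWF_of_seq fun v hv hanti => ?_
  choose μ x hμ hx hx0 hx1 hveq using hv
  set t : ℕ → ℝ := fun i => 1 - v i with ht
  have htm : StrictMono t := fun i j hij => by
    have := hanti hij; simp only [ht]; linarith
  have hμ0 : ∀ i, (0 : ℝ) < (μ i : ℝ) := fun i => by exact_mod_cast hμ i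
  have hteq : ∀ i, t i = (1 - x i) / (μ i : ℝ) := by
    intro i
    have h1 := x_from_v (hμ i) (hveq i)
    have h2 := (hμ0 i).ne'
    field_simp [ht]
    linarith
  have ht1pos : 0 < t 1 := by
    have h0 : 0 ≤ t 0 := by
      rw [hteq 0]
      exact div_nonneg (by linarith [hx1 0]) (hμ0 0).le
    have := htm (Nat.zero_lt_one)
    linarith
  have hbound : ∀ i, μ (i + 2) ≤ Nat.ceil (1 / t 1) := by
    intro i
    have h1 : t 1 < t (i + 2) := htm (by omega)
    have h2 : t (i + 2) ≤ 1 / (μ (i + 2) : ℝ) := by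
      rw [hteq (i + 2), div_le_div_iff₀ (hμ0 _) (hμ0 _), one_mul]
      nlinarith [hx0 (i + 2), hμ0 (i + 2)]
    have h4 : (μ (i + 2) : ℝ) * t (i + 2) ≤ 1 := by
      rw [mul_comm, ← le_div_iff₀ (hμ0 _)]; exact h2
    have h3 : (μ (i + 2) : ℝ) ≤ 1 / t 1 := by
      rw [le_div_iff₀ ht1pos]
      nlinarith [mul_lt_mul_of_pos_left h1 (hμ0 (i + 2))]
    exact_mod_cast h3.trans (Nat.le_ceil _)
  obtain ⟨m, g, hg⟩ := exists_const_subseq_nat (fun i => μ (i + 2)) _ hbound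
  have hanti' : StrictAnti fun i => x (g i + 2) := by
    intro i j hij
    have h1 : t (g i + 2) < t (g j + 2) := htm (by have := g.strictMono hij; omega)
    have hm0 : (0 : ℝ) < (m : ℝ) := by
      have := hg 0 ▸ hμ (g 0 + 2); exact_mod_cast Nat.lt_of_lt_of_le Nat.zero_lt_one this
    have e1 := x_from_v (hμ (g i + 2)) (hveq (g i + 2))
    have e2 := x_from_v (hμ (g j + 2)) (hveq (g j + 2))
    rw [hg i] at e1; rw [hg j] at e2
    have : (m : ℝ) * (1 - v (g i + 2)) < (m : ℝ) * (1 - v (g j + 2)) := by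
      apply mul_lt_mul_of_pos_left _ hm0
      simp only [ht] at h1; linarith
    simp only [ht] at h1 ⊢
    linarith [e1, e2]
  exact noStrictAnti hT (fun i => hx (g i + 2)) hanti'

private lemma DbSet_isWF {F : Set (ℝ → ℝ)} {a b ε : ℝ} (hS : (Svals F a b).IsWF)
    (hε : 0 < ε) (M B : ℕ) : (DbSet F a b ε M B).IsWF := by
  have hT : (iterAdd (Zset F a b ε) M).IsWF := iterAdd_isWF (Zset_isWF hS hε) M
  refine isWF_of_seq fun v hv hanti => ?_
  choose μ x hμ hμB hx hx0 hveq using hv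
  obtain ⟨m, g, hg⟩ := exists_const_subseq_nat μ B hμB
  have hanti' : StrictAnti fun i => x (g i) := by
    intro i j hij
    have h1 : v (g j) < v (g i) := hanti (g.strictMono hij)
    have hm0 : (0 : ℝ) < (m : ℝ) := by
      have := hg 0 ▸ hμ (g 0); exact_mod_cast Nat.lt_of_lt_of_le Nat.zero_lt_one this
    have e1 := x_from_v (hμ (g i)) (hveq (g i))
    have e2 := x_from_v (hμ (g j)) (hveq (g j))
    rw [hg i] at e1; rw [hg j] at e2
    have : (m : ℝ) * (1 - v (g i)) < (m : ℝ) * (1 - v (g j)) := by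
      apply mul_lt_mul_of_pos_left _ hm0
      linarith
    linarith [e1, e2]
  exact noStrictAnti hT (fun i => hx (g i)) hanti'

private lemma zero_mem_calD {F : Set (ℝ → ℝ)} {a b : ℝ} (hab : a < b) :
    (0 : ℝ → ℝ) ∈ calD F a b := by
  refine Set.mem_iUnion₂.mpr ⟨b, ⟨hab, le_refl b⟩, 1, Nat.one_pos, 0, Or.inl rfl, ?_, ?_⟩
  · funext t; simp
  · intro t _; simp

private lemma sum_rigidity {N : ℕ} (c : Fin N → ℕ) (hc : ∀ j, 1 ≤ c j) (K : ℝ)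
    (α : ℕ → Fin N → ℝ) (hmono : ∀ j, Monotone fun i => α i j)
    (hsum : ∀ i, ∑ j, (c j : ℝ) * α i j = K) : ∀ i j, α i j = α 0 j := by
  intro i j
  have h1 : ∀ j' ∈ Finset.univ, (c j' : ℝ) * α 0 j' ≤ (c j' : ℝ) * α i j' := fun j' _ =>
    mul_le_mul_of_nonneg_left (hmono j' (Nat.zero_le i)) (by positivity)
  have h2 : ∑ j', (c j' : ℝ) * α 0 j' = ∑ j', (c j' : ℝ) * α i j' := by
    rw [hsum 0, hsum i]
  have h3 := (Finset.sum_eq_sum_iff_of_le h1).mp h2 j (Finset.mem_univ j)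
  have hcj : ((c j : ℝ)) ≠ 0 := by
    have := hc j; positivity
  exact (mul_left_cancel₀ hcj h3.symm)

/-- Padded form of a `Wset` relation, with a fixed number `N` of terms. -/
private lemma Wset_padded {F : Set (ℝ → ℝ)} {a b ε K : ℝ} (hab : a < b)
    (hlin : ∀ f ∈ F, IsLinearFun f)
    (hnn : ∀ f ∈ F, ∀ t ∈ Set.Icc a b, 0 ≤ f t)
    (hgapS : ∀ x ∈ Svals F a b, 0 < x → ε ≤ x)
    (hε : 0 < ε) (hε1 : ε ≤ 1)
    {w : ℝ → ℝ} (hw : w ∈ Wset F a b K) (N : ℕ) (hN : 2 * K / ε ≤ (N : ℝ)) :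
    ∃ (rr : Fin N → ℕ) (wws : Fin N → ℝ → ℝ) (j0 : Fin N),
      (∀ j, 1 ≤ rr j) ∧ (∀ j, rr j ≤ N) ∧ (∀ j, wws j ∈ calD F a b) ∧
      (∑ j, (rr j : ℝ) * wws j a = K) ∧ (∑ j, (rr j : ℝ) * wws j b = K) ∧ w = wws j0 := by
  obtain ⟨s, hs, r, ws, hr, hD, hne, hrel, j, hj⟩ := hw
  have haI : a ∈ Set.Icc a b := ⟨le_refl a, hab.le⟩
  have hbI : b ∈ Set.Icc a b := ⟨hab.le, le_refl b⟩
  have hanat : ∀ j', Anat F a b ε (ws j') := fun j' =>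
    calD_anat hab hlin hnn hgapS hε (hD j')
  have hterm_lb : ∀ j', ε ≤ ws j' a + ws j' b := fun j' =>
    Anat_eps hε hε1 (hanat j') (hne j')
  have hrela : ∑ j', (r j' : ℝ) * ws j' a = K := hrel a haI
  have hrelb : ∑ j', (r j' : ℝ) * ws j' b = K := hrel b hbI
  have hsum2 : ∑ j', (r j' : ℝ) * (ws j' a + ws j' b) = 2 * K := by
    have : ∑ j', ((r j' : ℝ) * ws j' a + (r j' : ℝ) * ws j' b) = 2 * K := by
      rw [Finset.sum_add_distrib, hrela, hrelb]; ring
    rw [← this]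
    exact Finset.sum_congr rfl fun j' _ => by ring
  have hr1 : ∀ j', (1 : ℝ) ≤ (r j' : ℝ) := fun j' => by exact_mod_cast hr j'
  have htermε : ∀ j', ε ≤ (r j' : ℝ) * (ws j' a + ws j' b) := by
    intro j'
    have := hterm_lb j'
    nlinarith [hr1 j']
  have hterm0 : ∀ j', (0 : ℝ) ≤ (r j' : ℝ) * (ws j' a + ws j' b) := fun j' =>
    le_trans hε.le (htermε j')
  have hsN : s ≤ N := by
    have h1 : (s : ℝ) * ε ≤ 2 * K := by
      have := Finset.card_nsmul_le_sum Finset.univ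
        (fun j' => (r j' : ℝ) * (ws j' a + ws j' b)) ε (fun j' _ => htermε j')
      rw [hsum2] at this
      simpa [nsmul_eq_mul, Finset.card_univ] using this
    have h2 : (s : ℝ) ≤ 2 * K / ε := by rw [le_div_iff₀ hε]; linarith
    exact_mod_cast h2.trans hN
  have hrN : ∀ j', r j' ≤ N := by
    intro j'
    have h1 : (r j' : ℝ) * ε ≤ 2 * K := by
      have hle : (r j' : ℝ) * (ws j' a + ws j' b) ≤ 2 * K := by
        rw [← hsum2]
        exact Finset.single_le_sum (fun j'' _ => hterm0 j'') (Finset.mem_univ j')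
      nlinarith [hterm_lb j', hr1 j']
    have h2 : (r j' : ℝ) ≤ 2 * K / ε := by rw [le_div_iff₀ hε]; linarith
    exact_mod_cast h2.trans hN
  have hN1 : 1 ≤ N := le_trans hs hsN
  classical
  set rr : Fin N → ℕ := fun j' => if h : (j' : ℕ) < s then r ⟨j', h⟩ else 1 with hrr
  set wws : Fin N → ℝ → ℝ := fun j' => if h : (j' : ℕ) < s then ws ⟨j', h⟩ else 0 with hwws
  have hsplit : ∀ (x : Fin s → ℝ),
      ∑ j' : Fin N, ((rr j' : ℝ) * (if h : (j' : ℕ) < s then x ⟨j', h⟩ else 0)) =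
        ∑ j' : Fin s, (r j' : ℝ) * x j' := by
    intro x
    have e1 : ∀ j' : Fin N, ((rr j' : ℝ) * (if h : (j' : ℕ) < s then x ⟨j', h⟩ else 0)) =
        if h : (j' : ℕ) < s then (r ⟨j', h⟩ : ℝ) * x ⟨j', h⟩ else 0 := by
      intro j'
      simp only [hrr]
      split
      · rfl
      · simp
    rw [Finset.sum_congr rfl fun j' _ => e1 j']
    rw [Fin.sum_univ_eq_sum_range (fun jn => if h : jn < s then (r ⟨jn, h⟩ : ℝ) * x ⟨jn, h⟩ else 0) N]
    rw [← Finset.sum_subset (Finset.range_subset_range.mpr hsN) (fun i _ hi => dif_neg (by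
      intro hlt
      exact hi (Finset.mem_range.mpr hlt)))]
    rw [← Fin.sum_univ_eq_sum_range (fun jn => if h : jn < s then (r ⟨jn, h⟩ : ℝ) * x ⟨jn, h⟩ else 0) s]
    refine Finset.sum_congr rfl fun j' _ => ?_
    rw [dif_pos j'.isLt]
  have hval : ∀ (j' : Fin N) (t : ℝ), wws j' t = if h : (j' : ℕ) < s then ws ⟨j', h⟩ t else 0 := by
    intro j' t
    simp only [hwws]
    split
    · rfl
    · simp
  refine ⟨rr, wws, ⟨(j : ℕ), lt_of_lt_of_le j.isLt hsN⟩, ?_, ?_, ?_, ?_, ?_, ?_⟩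
  · intro j'; simp only [hrr]; split
    · exact hr _
    · exact le_refl 1
  · intro j'; simp only [hrr]; split
    · exact hrN _
    · exact hN1
  · intro j'; simp only [hwws]; split
    · exact hD _
    · exact zero_mem_calD hab
  · rw [Finset.sum_congr rfl fun j' _ => by rw [hval j' a]]
    rw [hsplit (fun j'' => ws j'' a)]
    exact hrela
  · rw [Finset.sum_congr rfl fun j' _ => by rw [hval j' b]]
    rw [hsplit (fun j'' => ws j'' b)]
    exact hrelb
  · simp only [hwws]
    rw [dif_pos (show ((⟨(j : ℕ), lt_of_lt_of_le j.isLt hsN⟩ : Fin N) : ℕ) < s from j.isLt)]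
    rw [hj]

private lemma part1 {F : Set (ℝ → ℝ)} {a b ε K : ℝ} (hab : a < b)
    (hlin : ∀ f ∈ F, IsLinearFun f)
    (hnn : ∀ f ∈ F, ∀ t ∈ Set.Icc a b, 0 ≤ f t)
    (hgapS : ∀ x ∈ Svals F a b, 0 < x → ε ≤ x)
    (hS : (Svals F a b).IsWF) (hε : 0 < ε) (hε1 : ε ≤ 1) :
    Set.Finite {p : ℝ × ℝ | ∃ w ∈ Wset F a b K, p = (w a, w b)} := by
  classical
  by_contra hinf
  rw [← Set.Infinite] at hinf
  let e := hinf.natEmbedding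
  have hpmem : ∀ i : ℕ, ∃ w ∈ Wset F a b K, (e i : ℝ × ℝ) = (w a, w b) := fun i => (e i).2
  have hpinj : ∀ i i' : ℕ, (e i : ℝ × ℝ) = (e i' : ℝ × ℝ) → i = i' :=
    fun i i' h => e.injective (Subtype.ext h)
  choose w hwW hpe using hpmem
  set N := Nat.ceil (2 * K / ε) with hNdef
  have hNle : 2 * K / ε ≤ (N : ℝ) := Nat.le_ceil _
  have hpad := fun i => Wset_padded hab hlin hnn hgapS hε hε1 (hwW i) N hNle
  choose rr wws j0 hrr1 hrrN hcalD hsa hsb hwj using hpad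
  -- stage 1 : make the coefficients and the distinguished index constant
  obtain ⟨cR, g1, hg1⟩ := exists_const_subseq
    (fun i => ((fun j => (⟨rr i j, Nat.lt_succ_of_le (hrrN i j)⟩ : Fin (N + 1))) , j0 i))
  set R : Fin N → ℕ := fun j => (cR.1 j : ℕ) with hRdef
  set J : Fin N := cR.2 with hJdef
  have hRconst : ∀ i j, rr (g1 i) j = R j := by
    intro i j
    have := congrFun (congrArg Prod.fst (hg1 i)) j
    exact congrArg Fin.val this
  have hJ : ∀ i, j0 (g1 i) = J := fun i => congrArg Prod.snd (hg1 i)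
  have hR1 : ∀ j, 1 ≤ R j := fun j => hRconst 0 j ▸ hrr1 (g1 0) j
  -- stage 2 : anatomy of each term
  have hA : ∀ i j, Anat F a b ε (wws (g1 i) j) := fun i j =>
    calD_anat hab hlin hnn hgapS hε (hcalD (g1 i) j)
  choose μ xa xb hμ hwa hwb hxaS hxbS hxa1 hslope hgap using hA
  have hAnat : ∀ i j, Anat F a b ε (wws (g1 i) j) := fun i j =>
    ⟨μ i j, xa i j, xb i j, hμ i j, hwa i j, hwb i j, hxaS i j, hxbS i j, hxa1 i j,
      hslope i j, hgap i j⟩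
  set M1 := Nat.ceil (1 / ε) with hM1def
  have hM1ε : (1 : ℝ) ≤ (M1 : ℝ) * ε := by
    have h1 : (1 / ε : ℝ) ≤ (M1 : ℝ) := Nat.le_ceil _
    rw [div_le_iff₀ hε] at h1
    linarith
  have h1M1 : (1 : ℝ) < ((M1 : ℝ) + 1) * ε := by nlinarith
  have hαDa : ∀ i j, wws (g1 i) j a ∈ DaSet F a b ε M1 := by
    intro i j
    exact ⟨μ i j, xa i j, hμ i j,
      SumsZ_mem_iterAdd hε M1 (hxaS i j) (lt_of_le_of_lt (hxa1 i j) h1M1),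
      SumsZ_nonneg hε (hxaS i j), hxa1 i j, hwa i j⟩
  obtain ⟨g2, hg2⟩ := exists_monotone_subseq_family N (fun _ => DaSet F a b ε M1)
    (fun _ => DaSet_isWF hS hε M1) (fun i j => wws (g1 i) j a) hαDa
  have hsum_a : ∀ i, ∑ j, (R j : ℝ) * wws (g1 (g2 i)) j a = K := by
    intro i
    rw [← hsa (g1 (g2 i))]
    exact Finset.sum_congr rfl fun j _ => by rw [hRconst (g2 i) j]
  have hconst_a := sum_rigidity R hR1 K (fun i j => wws (g1 (g2 i)) j a) hg2 hsum_a
  set αc : Fin N → ℝ := fun j => wws (g1 (g2 0)) j a with hαcdef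
  have hαc : ∀ i j, wws (g1 (g2 i)) j a = αc j := fun i j => hconst_a i j
  have hαc1 : ∀ j, αc j ≤ 1 := fun j => (Anat_waLe1 hε (hAnat (g2 0) j)).2.1
  -- bound on values at b from the relation
  have hβ0 : ∀ i j, 0 ≤ wws (g1 i) j b := fun i j => (Anat_waLe1 hε (hAnat i j)).2.2.1
  have hβle : ∀ i j, wws (g1 (g2 i)) j b ≤ |K| := by
    intro i j
    have hterm0 : ∀ j', (0 : ℝ) ≤ (R j' : ℝ) * wws (g1 (g2 i)) j' b := by
      intro j'
      exact mul_nonneg (by positivity) (hβ0 (g2 i) j')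
    have hsingle : (R j : ℝ) * wws (g1 (g2 i)) j b ≤ K := by
      have h2 : ∑ j', (R j' : ℝ) * wws (g1 (g2 i)) j' b = K := by
        rw [← hsb (g1 (g2 i))]
        exact Finset.sum_congr rfl fun j' _ => by rw [hRconst (g2 i) j']
      rw [← h2]
      exact Finset.single_le_sum (fun j' _ => hterm0 j') (Finset.mem_univ j)
    have hRj : (1 : ℝ) ≤ (R j : ℝ) := by exact_mod_cast hR1 j
    have h3 := hβ0 (g2 i) j
    nlinarith [le_abs_self K]
  -- membership of values at b in a well-founded set
  set Bd : Fin N → ℕ := fun j => Nat.ceil (1 / (1 - αc j)) with hBddef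
  set Mb : Fin N → ℕ := fun j => Nat.ceil ((1 + (Bd j : ℝ) * (|K| + 1)) / ε) with hMbdef
  have hMbε : ∀ j, 1 + (Bd j : ℝ) * (|K| + 1) < ((Mb j : ℝ) + 1) * ε := by
    intro j
    have h1 : ((1 + (Bd j : ℝ) * (|K| + 1)) / ε : ℝ) ≤ (Mb j : ℝ) := Nat.le_ceil _
    rw [div_le_iff₀ hε] at h1
    nlinarith
  have hβmem : ∀ i j,
      wws (g1 (g2 i)) j b ∈ DaSet F a b ε M1 ∪ DbSet F a b ε (Mb j) (Bd j) := by
    intro i j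
    have hm1 : (1 : ℝ) ≤ (μ (g2 i) j : ℝ) := by exact_mod_cast hμ (g2 i) j
    have heqa : αc j = ((μ (g2 i) j : ℝ) - 1 + xa (g2 i) j) / (μ (g2 i) j) := by
      rw [← hαc i j]; exact hwa (g2 i) j
    by_cases hc : αc j = 1
    · left
      have hya1 : xa (g2 i) j = 1 := by
        rw [hc] at heqa
        have hμ0 : ((μ (g2 i) j : ℝ)) ≠ 0 := by linarith
        field_simp at heqa
        linarith
      have hyb1 : xb (g2 i) j ≤ 1 := hslope (g2 i) j hya1
      exact ⟨μ (g2 i) j, xb (g2 i) j, hμ (g2 i) j,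
        SumsZ_mem_iterAdd hε M1 (hxbS (g2 i) j) (lt_of_le_of_lt hyb1 h1M1),
        SumsZ_nonneg hε (hxbS (g2 i) j), hyb1, hwb (g2 i) j⟩
    · right
      have hαlt : αc j < 1 := lt_of_le_of_ne (hαc1 j) hc
      have hya0 : 0 ≤ xa (g2 i) j := SumsZ_nonneg hε (hxaS (g2 i) j)
      have hμle : (μ (g2 i) j : ℝ) ≤ 1 / (1 - αc j) := by
        have h2 : (μ (g2 i) j : ℝ) * (1 - αc j) = 1 - xa (g2 i) j := by
          rw [heqa]
          have hμ0 : ((μ (g2 i) j : ℝ)) ≠ 0 := by linarith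
          field_simp
          ring
        rw [le_div_iff₀ (by linarith)]
        linarith
      have hmBd : μ (g2 i) j ≤ Bd j := by
        have := hμle.trans (Nat.le_ceil _)
        exact_mod_cast this
      have hβK := hβle i j
      have hybval : xb (g2 i) j = 1 - (μ (g2 i) j : ℝ) * (1 - wws (g1 (g2 i)) j b) :=
        x_from_v (hμ (g2 i) j) (hwb (g2 i) j)
      have hBdR : (μ (g2 i) j : ℝ) ≤ (Bd j : ℝ) := by exact_mod_cast hmBd
      have hb0 := hβ0 (g2 i) j
      have hybub : xb (g2 i) j ≤ 1 + (Bd j : ℝ) * (|K| + 1) := by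
        rw [hybval]
        rcases le_or_gt (wws (g1 (g2 i)) j b) 1 with h | h
        · nlinarith [mul_nonneg (show (0:ℝ) ≤ (Bd j : ℝ) by positivity)
            (show (0:ℝ) ≤ |K| + 1 by positivity),
            mul_nonneg (by linarith : (0:ℝ) ≤ (μ (g2 i) j : ℝ))
            (sub_nonneg.mpr h)]
        · nlinarith [mul_le_mul hBdR
            (show wws (g1 (g2 i)) j b - 1 ≤ |K| + 1 by linarith)
            (by linarith) (by positivity)]
      exact ⟨μ (g2 i) j, xb (g2 i) j, hμ (g2 i) j, hmBd,
        SumsZ_mem_iterAdd hε (Mb j) (hxbS (g2 i) j) (lt_of_le_of_lt hybub (hMbε j)),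
        SumsZ_nonneg hε (hxbS (g2 i) j), hwb (g2 i) j⟩
  obtain ⟨g3, hg3⟩ := exists_monotone_subseq_family N
    (fun j => DaSet F a b ε M1 ∪ DbSet F a b ε (Mb j) (Bd j))
    (fun j => (DaSet_isWF hS hε M1).union (DbSet_isWF hS hε (Mb j) (Bd j)))
    (fun i j => wws (g1 (g2 i)) j b) hβmem
  have hsum_b : ∀ i, ∑ j, (R j : ℝ) * wws (g1 (g2 (g3 i))) j b = K := by
    intro i
    rw [← hsb (g1 (g2 (g3 i)))]
    exact Finset.sum_congr rfl fun j _ => by rw [hRconst (g2 (g3 i)) j]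
  have hconst_b := sum_rigidity R hR1 K (fun i j => wws (g1 (g2 (g3 i))) j b) hg3 hsum_b
  -- the contradiction
  have h01 : (e (g1 (g2 (g3 0))) : ℝ × ℝ) = (e (g1 (g2 (g3 1))) : ℝ × ℝ) := by
    rw [hpe, hpe, hwj (g1 (g2 (g3 0))), hwj (g1 (g2 (g3 1))), hJ (g2 (g3 0)), hJ (g2 (g3 1))]
    have ha' : wws (g1 (g2 (g3 0))) J a = wws (g1 (g2 (g3 1))) J a := by
      rw [hαc (g3 0) J, hαc (g3 1) J]
    have hb' : wws (g1 (g2 (g3 1))) J b = wws (g1 (g2 (g3 0))) J b := hconst_b 1 J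
    rw [ha', hb']
  have heq := hpinj _ _ h01
  have hlt : g1 (g2 (g3 0)) < g1 (g2 (g3 1)) :=
    g1.strictMono (g2.strictMono (g3.strictMono Nat.zero_lt_one))
  omega

private lemma part2core {F : Set (ℝ → ℝ)} {a b ε : ℝ} (hab : a < b)
    (hlin : ∀ f ∈ F, IsLinearFun f)
    (hnn : ∀ f ∈ F, ∀ t ∈ Set.Icc a b, 0 ≤ f t)
    (hgapS : ∀ x ∈ Svals F a b, 0 < x → ε ≤ x)
    (hS : (Svals F a b).IsWF) (hε : 0 < ε)
    (ca cb : ℝ)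
    (f : ℕ → ℝ → ℝ) (hfF : ∀ i, f i ∈ F)
    (hfinj : ∀ i i', f i = f i' → i = i')
    (n : ℕ → ℕ) (hn : ∀ i, 1 ≤ n i)
    (va vb : ℕ → ℝ)
    (hvaS : ∀ i, va i ∈ SumsZ F a b ε) (hvbS : ∀ i, vb i ∈ SumsZ F a b ε)
    (eqa : ∀ i, (n i : ℝ) * f i a + va i = ca)
    (eqb : ∀ i, (n i : ℝ) * f i b + vb i = cb) : False := by
  classical
  have haI : a ∈ Set.Icc a b := ⟨le_refl a, hab.le⟩
  have hbI : b ∈ Set.Icc a b := ⟨hab.le, le_refl b⟩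
  have hfa0 : ∀ i, 0 ≤ f i a := fun i => hnn _ (hfF i) a haI
  have hfb0 : ∀ i, 0 ≤ f i b := fun i => hnn _ (hfF i) b hbI
  have hfaS : ∀ i, f i a ∈ Svals F a b := fun i => Or.inl ⟨f i, hfF i, rfl⟩
  have hfbS : ∀ i, f i b ∈ Svals F a b := fun i => Or.inr ⟨f i, hfF i, rfl⟩
  -- extract monotone subsequences of both endpoint values
  obtain ⟨g1, hg1⟩ := exists_monotone_subseq_of_isWF hS (fun i => f i a) hfaS
  obtain ⟨g2, hg2⟩ := exists_monotone_subseq_of_isWF hS (fun i => f (g1 i) b)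
    (fun i => hfbS (g1 i))
  set ψ : ℕ → ℕ := fun i => g1 (g2 i) with hψdef
  have hψmono : StrictMono ψ := fun i j h => g1.strictMono (g2.strictMono h)
  have hmonA : Monotone fun i => f (ψ i) a := fun i j h => hg1 (g2.monotone h)
  have hmonB : Monotone fun i => f (ψ i) b := fun i j h => hg2 h
  -- the sum of endpoint values is strictly monotone
  have hσ : StrictMono fun i => f (ψ i) a + f (ψ i) b := by
    intro i j hij
    dsimp only
    have hA := hmonA hij.le
    have hB := hmonB hij.le
    dsimp only at hA hB
    have hne : f (ψ i) ≠ f (ψ j) := by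
      intro h
      exact absurd (hfinj _ _ h) (Nat.ne_of_lt (hψmono hij))
    rcases lt_or_eq_of_le hA with h | h
    · linarith
    · rcases lt_or_eq_of_le hB with h' | h'
      · linarith
      · exact absurd (linear_ext hab.ne (hlin _ (hfF (ψ i))) (hlin _ (hfF (ψ j))) h h') hne
  -- on the shifted sequence the sum is at least ε
  have hσε : ∀ i, ε ≤ f (ψ (i + 1)) a + f (ψ (i + 1)) b := by
    intro i
    have h0 : 0 ≤ f (ψ 0) a + f (ψ 0) b := by
      have := hfa0 (ψ 0); have := hfb0 (ψ 0); linarith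
    have h1 : f (ψ 0) a + f (ψ 0) b < f (ψ (i + 1)) a + f (ψ (i + 1)) b :=
      hσ (Nat.succ_pos i)
    rcases lt_or_eq_of_le (hfa0 (ψ (i + 1))) with h | h
    · have := hgapS _ (hfaS (ψ (i + 1))) h
      have := hfb0 (ψ (i + 1)); linarith
    · rcases lt_or_eq_of_le (hfb0 (ψ (i + 1))) with h' | h'
      · have := hgapS _ (hfbS (ψ (i + 1))) h'
        have := hfa0 (ψ (i + 1)); linarith
      · exfalso; rw [← h, ← h'] at h1; linarith
  -- bound the coefficients n
  have hca0 : 0 ≤ ca := by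
    have := eqa 0
    have h1 : (0 : ℝ) ≤ (n 0 : ℝ) * f 0 a := mul_nonneg (by positivity) (hfa0 0)
    have h2 := SumsZ_nonneg hε (hvaS 0)
    linarith
  have hcb0 : 0 ≤ cb := by
    have := eqb 0
    have h1 : (0 : ℝ) ≤ (n 0 : ℝ) * f 0 b := mul_nonneg (by positivity) (hfb0 0)
    have h2 := SumsZ_nonneg hε (hvbS 0)
    linarith
  have hnbd : ∀ i, n (ψ (i + 1)) ≤ Nat.ceil ((ca + cb) / ε) := by
    intro i
    have h1 : (n (ψ (i + 1)) : ℝ) * (f (ψ (i + 1)) a + f (ψ (i + 1)) b) ≤ ca + cb := by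
      have e1 := eqa (ψ (i + 1)); have e2 := eqb (ψ (i + 1))
      have h2 := SumsZ_nonneg hε (hvaS (ψ (i + 1)))
      have h3 := SumsZ_nonneg hε (hvbS (ψ (i + 1)))
      nlinarith
    have h4 : (n (ψ (i + 1)) : ℝ) * ε ≤ ca + cb := by
      have h5 : (0 : ℝ) ≤ (n (ψ (i + 1)) : ℝ) := by positivity
      nlinarith [hσε i]
    have h6 : (n (ψ (i + 1)) : ℝ) ≤ (ca + cb) / ε := by
      rw [le_div_iff₀ hε]; linarith
    exact_mod_cast h6.trans (Nat.le_ceil _)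
  obtain ⟨n0, g3, hg3⟩ := exists_const_subseq_nat (fun i => n (ψ (i + 1))) _ hnbd
  have hn0 : 1 ≤ n0 := hg3 0 ▸ hn (ψ (g3 0 + 1))
  have hn0R : (1 : ℝ) ≤ (n0 : ℝ) := by exact_mod_cast hn0
  -- the sequence of sums va + vb is strictly decreasing in a well-founded set
  set Ma := Nat.ceil (ca / ε) with hMadef
  set Mb' := Nat.ceil (cb / ε) with hMbdef
  have hcaε : ca < ((Ma : ℝ) + 1) * ε := by
    have h1 : (ca / ε : ℝ) ≤ (Ma : ℝ) := Nat.le_ceil _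
    rw [div_le_iff₀ hε] at h1
    nlinarith
  have hcbε : cb < ((Mb' : ℝ) + 1) * ε := by
    have h1 : (cb / ε : ℝ) ≤ (Mb' : ℝ) := Nat.le_ceil _
    rw [div_le_iff₀ hε] at h1
    nlinarith
  have humem : ∀ i, va (ψ (g3 i + 1)) + vb (ψ (g3 i + 1)) ∈
      iterAdd (Zset F a b ε) (Ma + Mb') := by
    intro i
    have h1 : va (ψ (g3 i + 1)) ≤ ca := by
      have := eqa (ψ (g3 i + 1))
      have h2 : (0 : ℝ) ≤ (n (ψ (g3 i + 1)) : ℝ) * f (ψ (g3 i + 1)) a :=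
        mul_nonneg (by positivity) (hfa0 _)
      linarith
    have h1' : vb (ψ (g3 i + 1)) ≤ cb := by
      have := eqb (ψ (g3 i + 1))
      have h2 : (0 : ℝ) ≤ (n (ψ (g3 i + 1)) : ℝ) * f (ψ (g3 i + 1)) b :=
        mul_nonneg (by positivity) (hfb0 _)
      linarith
    exact add_mem_iterAdd Ma Mb' _ _
      (SumsZ_mem_iterAdd hε Ma (hvaS _) (lt_of_le_of_lt h1 hcaε))
      (SumsZ_mem_iterAdd hε Mb' (hvbS _) (lt_of_le_of_lt h1' hcbε))
  have huanti : StrictAnti fun i => va (ψ (g3 i + 1)) + vb (ψ (g3 i + 1)) := by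
    intro i j hij
    dsimp only
    have e1 := eqa (ψ (g3 i + 1)); have e2 := eqb (ψ (g3 i + 1))
    have e3 := eqa (ψ (g3 j + 1)); have e4 := eqb (ψ (g3 j + 1))
    rw [hg3 i] at e1 e2; rw [hg3 j] at e3 e4
    have hσlt : f (ψ (g3 i + 1)) a + f (ψ (g3 i + 1)) b <
        f (ψ (g3 j + 1)) a + f (ψ (g3 j + 1)) b := by
      apply hσ
      have := g3.strictMono hij
      omega
    have hn0pos : (0 : ℝ) < (n0 : ℝ) := by linarith
    nlinarith [mul_lt_mul_of_pos_left hσlt hn0pos]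
  exact noStrictAnti (iterAdd_isWF (Zset_isWF hS hε) (Ma + Mb')) humem huanti

private lemma part2 {F : Set (ℝ → ℝ)} {a b ε : ℝ} (hab : a < b)
    (hlin : ∀ f ∈ F, IsLinearFun f)
    (hnn : ∀ f ∈ F, ∀ t ∈ Set.Icc a b, 0 ≤ f t)
    (hgapS : ∀ x ∈ Svals F a b, 0 < x → ε ≤ x)
    (hS : (Svals F a b).IsWF) (hε : 0 < ε)
    (p : ℝ × ℝ) (hp1 : p.1 ≤ 1) (hp12 : p.1 = 1 → p.2 ≤ 1) :
    Set.Finite {f : ℝ → ℝ | f ∈ F ∧ ∃ m n : ℕ, 1 ≤ m ∧ 1 ≤ n ∧ ∃ va vb : ℝ,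
      va ∈ SumsZ F a b ε ∧ vb ∈ SumsZ F a b ε ∧
      (n : ℝ) * f a + va = 1 + (m : ℝ) * (p.1 - 1) ∧
      (n : ℝ) * f b + vb = 1 + (m : ℝ) * (p.2 - 1)} := by
  classical
  by_contra hinf
  rw [← Set.Infinite] at hinf
  let e := hinf.natEmbedding
  have hmem : ∀ i : ℕ, (e i : ℝ → ℝ) ∈ F ∧ ∃ m n : ℕ, 1 ≤ m ∧ 1 ≤ n ∧ ∃ va vb : ℝ,
      va ∈ SumsZ F a b ε ∧ vb ∈ SumsZ F a b ε ∧
      (n : ℝ) * (e i : ℝ → ℝ) a + va = 1 + (m : ℝ) * (p.1 - 1) ∧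
      (n : ℝ) * (e i : ℝ → ℝ) b + vb = 1 + (m : ℝ) * (p.2 - 1) := fun i => (e i).2
  set f : ℕ → ℝ → ℝ := fun i => (e i : ℝ → ℝ) with hfdef
  have hfF : ∀ i, f i ∈ F := fun i => (hmem i).1
  have hfinj : ∀ i i', f i = f i' → i = i' := fun i i' h => e.injective (Subtype.ext h)
  have hmem' : ∀ i : ℕ, ∃ m n : ℕ, 1 ≤ m ∧ 1 ≤ n ∧ ∃ va vb : ℝ,
      va ∈ SumsZ F a b ε ∧ vb ∈ SumsZ F a b ε ∧
      (n : ℝ) * f i a + va = 1 + (m : ℝ) * (p.1 - 1) ∧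
      (n : ℝ) * f i b + vb = 1 + (m : ℝ) * (p.2 - 1) := fun i => (hmem i).2
  choose m n hm hn va vb hvaS hvbS eqa eqb using hmem'
  have haI : a ∈ Set.Icc a b := ⟨le_refl a, hab.le⟩
  have hbI : b ∈ Set.Icc a b := ⟨hab.le, le_refl b⟩
  by_cases h1 : p.1 = 1
  · by_cases h2 : p.2 = 1
    · refine part2core hab hlin hnn hgapS hS hε 1 1 f hfF hfinj n hn va vb hvaS hvbS ?_ ?_
      · intro i; have := eqa i; rw [h1] at this; simpa using this
      · intro i; have := eqb i; rw [h2] at this; simpa using this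
    · have hp2lt : p.2 < 1 := lt_of_le_of_ne (hp12 h1) h2
      have hbd : ∀ i, m i ≤ Nat.ceil (1 / (1 - p.2)) := by
        intro i
        have h3 : (0 : ℝ) ≤ (n i : ℝ) * f i b := mul_nonneg (by positivity) (hnn _ (hfF i) b hbI)
        have h4 := SumsZ_nonneg hε (hvbS i)
        have h5 := eqb i
        have h6 : (m i : ℝ) * (1 - p.2) ≤ 1 := by nlinarith
        have h7 : (m i : ℝ) ≤ 1 / (1 - p.2) := by
          rw [le_div_iff₀ (by linarith)]; linarith
        exact_mod_cast h7.trans (Nat.le_ceil _)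
      obtain ⟨m0, g, hg⟩ := exists_const_subseq_nat m _ hbd
      refine part2core hab hlin hnn hgapS hS hε (1 + (m0 : ℝ) * (p.1 - 1))
        (1 + (m0 : ℝ) * (p.2 - 1)) (fun i => f (g i)) (fun i => hfF (g i))
        (fun i i' h => g.injective (hfinj _ _ h)) (fun i => n (g i)) (fun i => hn (g i))
        (fun i => va (g i)) (fun i => vb (g i)) (fun i => hvaS (g i)) (fun i => hvbS (g i))
        ?_ ?_
      · intro i; have := eqa (g i); rw [hg i] at this; exact this
      · intro i; have := eqb (g i); rw [hg i] at this; exact this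
  · have hp1lt : p.1 < 1 := lt_of_le_of_ne hp1 h1
    have hbd : ∀ i, m i ≤ Nat.ceil (1 / (1 - p.1)) := by
      intro i
      have h3 : (0 : ℝ) ≤ (n i : ℝ) * f i a := mul_nonneg (by positivity) (hnn _ (hfF i) a haI)
      have h4 := SumsZ_nonneg hε (hvaS i)
      have h5 := eqa i
      have h6 : (m i : ℝ) * (1 - p.1) ≤ 1 := by nlinarith
      have h7 : (m i : ℝ) ≤ 1 / (1 - p.1) := by
        rw [le_div_iff₀ (by linarith)]; linarith
      exact_mod_cast h7.trans (Nat.le_ceil _)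
    obtain ⟨m0, g, hg⟩ := exists_const_subseq_nat m _ hbd
    refine part2core hab hlin hnn hgapS hS hε (1 + (m0 : ℝ) * (p.1 - 1))
      (1 + (m0 : ℝ) * (p.2 - 1)) (fun i => f (g i)) (fun i => hfF (g i))
      (fun i i' h => g.injective (hfinj _ _ h)) (fun i => n (g i)) (fun i => hn (g i))
      (fun i => va (g i)) (fun i => vb (g i)) (fun i => hvaS (g i)) (fun i => hvbS (g i))
      ?_ ?_
    · intro i; have := eqa (g i); rw [hg i] at this; exact this
    · intro i; have := eqb (g i); rw [hg i] at this; exact this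

private lemma comb_SumsZ {F : Set (ℝ → ℝ)} {a b ε : ℝ} (hab : a < b)
    (hnn : ∀ f ∈ F, ∀ t ∈ Set.Icc a b, 0 ≤ f t)
    (hgapS : ∀ x ∈ Svals F a b, 0 < x → ε ≤ x)
    {k : ℕ} {nj : Fin k → ℕ} {fj : Fin k → ℝ → ℝ}
    (hnj : ∀ l, 0 < nj l) (hfj : ∀ l, fj l ∈ F) :
    (∑ l, (nj l : ℝ) * fj l a) ∈ SumsZ F a b ε ∧
      (∑ l, (nj l : ℝ) * fj l b) ∈ SumsZ F a b ε := by
  constructor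
  · refine ⟨k, fun l => (nj l : ℝ) * fj l a, ?_, rfl⟩
    intro l
    have hmem : fj l a ∈ Svals F a b := Or.inl ⟨fj l, hfj l, rfl⟩
    rcases eq_or_lt_of_le (hnn _ (hfj l) a ⟨le_refl a, hab.le⟩) with h | h
    · exact Or.inl (by dsimp only; rw [← h, mul_zero])
    · exact Or.inr ⟨nj l, hnj l, fj l a, hmem, hgapS _ hmem h, rfl⟩
  · refine ⟨k, fun l => (nj l : ℝ) * fj l b, ?_, rfl⟩
    intro l
    have hmem : fj l b ∈ Svals F a b := Or.inr ⟨fj l, hfj l, rfl⟩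
    rcases eq_or_lt_of_le (hnn _ (hfj l) b ⟨hab.le, le_refl b⟩) with h | h
    · exact Or.inl (by dsimp only; rw [← h, mul_zero])
    · exact Or.inr ⟨nj l, hnj l, fj l b, hmem, hgapS _ hmem h, rfl⟩

private lemma Wset_anat {F : Set (ℝ → ℝ)} {a b ε K : ℝ} (hab : a < b)
    (hlin : ∀ f ∈ F, IsLinearFun f)
    (hnn : ∀ f ∈ F, ∀ t ∈ Set.Icc a b, 0 ≤ f t)
    (hgapS : ∀ x ∈ Svals F a b, 0 < x → ε ≤ x)
    (hε : 0 < ε) {w : ℝ → ℝ} (hw : w ∈ Wset F a b K) : Anat F a b ε w := by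
  obtain ⟨s, hs, r, ws, hr, hD, hne, hrel, j, hj⟩ := hw
  rw [hj]
  exact calD_anat hab hlin hnn hgapS hε (hD j)

theorem finiteness_of_Dinv (a b : ℝ) (hab : a < b)
    (F : Set (ℝ → ℝ))
    (hlin : ∀ f ∈ F, IsLinearFun f)
    (hnonneg : ∀ f ∈ F, ∀ t ∈ Set.Icc a b, 0 ≤ f t)
    (hone : (fun _ => (1 : ℝ)) ∈ F)
    (hDCC : DCC (((fun f : ℝ → ℝ => f a) '' F) ∪ ((fun f : ℝ → ℝ => f b) '' F)))
    (K : ℝ) :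
    Set.Finite { f : ℝ → ℝ | f ∈ F ∧ ∃ m n : ℕ, 0 < m ∧ 0 < n ∧
      ∃ k : ℕ, ∃ nj : Fin k → ℕ, ∃ fj : Fin k → ℝ → ℝ,
        (∀ i, 0 < nj i) ∧ (∀ i, fj i ∈ F) ∧
        (fun t => ((m : ℝ) - 1 + (n : ℝ) * f t + ∑ i, (nj i : ℝ) * fj i t) / m)
          ∈ Wset F a b K } := by
  classical
  have hSwf : (Svals F a b).IsWF := by
    refine isWF_of_seq fun u hu hanti => hDCC ⟨u, ?_, hanti⟩
    exact hu
  have h1S : (1 : ℝ) ∈ Svals F a b := Or.inl ⟨(fun _ => (1 : ℝ)), hone, rfl⟩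
  set Spos := {x ∈ Svals F a b | 0 < x} with hSposdef
  have hSposwf : Spos.IsWF := hSwf.mono (Set.sep_subset _ _)
  have hSposne : Spos.Nonempty := ⟨1, h1S, one_pos⟩
  set ε := hSposwf.min hSposne with hεdef
  have hεmem := hSposwf.min_mem hSposne
  have hε : 0 < ε := hεmem.2
  have hε1 : ε ≤ 1 := hSposwf.min_le hSposne ⟨h1S, one_pos⟩
  have hgapS : ∀ x ∈ Svals F a b, 0 < x → ε ≤ x := fun x hx hpos =>
    hSposwf.min_le hSposne ⟨hx, hpos⟩
  have hPfin := part1 (K := K) hab hlin hnonneg hgapS hSwf hε hε1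
  have hPb : ∀ p ∈ {p : ℝ × ℝ | ∃ w ∈ Wset F a b K, p = (w a, w b)},
      p.1 ≤ 1 ∧ (p.1 = 1 → p.2 ≤ 1) := by
    rintro p ⟨w, hw, rfl⟩
    have hA := Wset_anat hab hlin hnonneg hgapS hε hw
    have hB := Anat_waLe1 hε hA
    exact ⟨hB.2.1, hB.2.2.2⟩
  apply Set.Finite.subset (Set.Finite.biUnion hPfin (fun p hp =>
    part2 hab hlin hnonneg hgapS hSwf hε p (hPb p hp).1 (hPb p hp).2))
  rintro f ⟨hfF, m, n, hm, hn, k, nj, fj, hnj, hfj, hwmem⟩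
  rw [Set.mem_iUnion₂]
  set w : ℝ → ℝ :=
    fun t => ((m : ℝ) - 1 + (n : ℝ) * f t + ∑ i, (nj i : ℝ) * fj i t) / m with hwdef
  have hmR : (0 : ℝ) < (m : ℝ) := by exact_mod_cast hm
  have hm0 : ((m : ℝ)) ≠ 0 := ne_of_gt hmR
  obtain ⟨hvaS, hvbS⟩ := comb_SumsZ hab hnonneg hgapS hnj hfj
  have hwa : w a = ((m : ℝ) - 1 + (n : ℝ) * f a + ∑ i, (nj i : ℝ) * fj i a) / m := rfl
  have hwb : w b = ((m : ℝ) - 1 + (n : ℝ) * f b + ∑ i, (nj i : ℝ) * fj i b) / m := rfl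
  refine ⟨(w a, w b), ⟨w, hwmem, rfl⟩, hfF, m, n, hm, hn,
    ∑ i, (nj i : ℝ) * fj i a, ∑ i, (nj i : ℝ) * fj i b, hvaS, hvbS, ?_, ?_⟩
  · show (n : ℝ) * f a + (∑ i, (nj i : ℝ) * fj i a) = 1 + (m : ℝ) * (w a - 1)
    rw [hwa]
    field_simp
    ring
  · show (n : ℝ) * f b + (∑ i, (nj i : ℝ) * fj i b) = 1 + (m : ℝ) * (w b - 1)
    rw [hwb]
    field_simp
    ring
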